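/- Eskeland shared-key consistency: let N > 1 and let g be a unit of Z/NZ with g^φ = 1 for a positive integer φ. Suppose for each i in a finite set W we have integers z_i, v_i, u with d_i = z_i*u + v_i*φ and public keys e_j satisfying e_j ≡ z_j (mod φ). Then for every i ∈ W, g^{d_i * ∏_{j∈W, j≠i} e_j} = g^{u * ∏_{j∈W} z_j}; in particular the value is independent of i. -/

import Mathlib

theorem stmt_12 (N : ℕ) (hN : 1 < N) (g : (ZMod N)ˣ)
    (φ : ℕ) (hφ : 0 < φ) (hgφ : g ^ φ = 1)
    (ι : Type*) [DecidableEq ι] (W : Finset ι)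
    (z v e d : ι → ℤ) (u : ℤ)
    (hd : ∀ i ∈ W, d i = z i * u + v i * (φ : ℤ))
    (he : ∀ j ∈ W, e j ≡ z j [ZMOD (φ : ℤ)]) :
    ∀ i ∈ W, g ^ (d i * ∏ j ∈ W.erase i, e j) = g ^ (u * ∏ j ∈ W, z j) := by
  intro i hi
  have key : ∀ a b : ℤ, a ≡ b [ZMOD (φ : ℤ)] → g ^ a = g ^ b := by
    intro a b h
    obtain ⟨t, ht⟩ := h.dvd
    have hb : b = a + (φ : ℤ) * t := by linarith
    rw [hb, zpow_add, zpow_mul, zpow_natCast, hgφ, one_zpow, mul_one]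
  apply key
  have hcong : ∀ a b : ℤ, ((a : ZMod φ) = b) → a ≡ b [ZMOD (φ : ℤ)] := by
    intro a b h
    exact (ZMod.intCast_eq_intCast_iff a b φ).mp h
  apply hcong
  have hprod : ((∏ j ∈ W.erase i, e j : ℤ) : ZMod φ) =
      ((∏ j ∈ W.erase i, z j : ℤ) : ZMod φ) := by
    push_cast
    exact Finset.prod_congr rfl fun j hj =>
      (ZMod.intCast_eq_intCast_iff _ _ _).mpr (he j (Finset.mem_of_mem_erase hj))
  have hW : (∏ j ∈ W, z j) = z i * ∏ j ∈ W.erase i, z j :=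
    (Finset.mul_prod_erase W z hi).symm
  rw [hd i hi, hW]
  push_cast [ZMod.natCast_self] at hprod ⊢
  rw [hprod]
  ring
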